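/- Let K be a differential ring with derivation D, let a_0 = 1, a_1, ..., a_n ∈ K, and let u ∈ K be arbitrary. Define I_k := Σ_{j=0}^{k} C(k,j) * a_{k−j} * Q_j(−a_1) with Q_j the covariant Bell polynomials relative to a_1, and define a_k^{⋆u} := Σ_{m=0}^{k} C(k,m) * I_m * P_{k−m}(a_1 − u); note that a_1^{⋆u} = a_1 − u. Then the u-star action fixes all gauge–Wilczynski covariants: for every 0 ≤ k ≤ n, Σ_{j=0}^{k} C(k,j) * a_{k−j}^{⋆u} * Q'_j(−(a_1 − u)) = I_k, where Q'_j are the covariant Bell polynomials relative to a_1 − u. -/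

import Mathlib

/-- Noncommutative Bell polynomials: `P 0 = 1`, `P (m+1) = D (P m) + u * P m`. -/
def bellP {K : Type*} [Ring K] (D : K → K) (u : K) : ℕ → K
  | 0 => 1
  | m + 1 => D (bellP D u m) + u * bellP D u m

/-- Covariant Bell polynomials relative to `c`:
`Q 0 = 1`, `Q (m+1) = Δ_c (Q m) + u * Q m` where `Δ_c b = D b + c*b - b*c`. -/
def qBell {K : Type*} [Ring K] (D : K → K) (c u : K) : ℕ → K
  | 0 => 1
  | m + 1 =>
      (D (qBell D c u m) + c * qBell D c u m - qBell D c u m * c)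
        + u * qBell D c u m

section Aux
variable {K : Type*} [Ring K] (D : K → K)

lemma myD_one (hmul : ∀ a b : K, D (a * b) = D a * b + a * D b) : D 1 = 0 := by
  have h := hmul 1 1
  simp only [one_mul, mul_one] at h
  exact (left_eq_add.mp h)

lemma myD_zero (hadd : ∀ a b : K, D (a + b) = D a + D b) : D 0 = 0 := by
  have h := hadd 0 0
  simp only [add_zero] at h
  exact (left_eq_add.mp h)

lemma myD_natCast (hadd : ∀ a b : K, D (a + b) = D a + D b)
    (hmul : ∀ a b : K, D (a * b) = D a * b + a * D b) (n : ℕ) : D (n : K) = 0 := by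
  induction n with
  | zero => simpa using myD_zero D hadd
  | succ m ih => push_cast; rw [hadd, ih, myD_one D hmul, add_zero]

lemma myD_natmul (hadd : ∀ a b : K, D (a + b) = D a + D b)
    (hmul : ∀ a b : K, D (a * b) = D a * b + a * D b) (n : ℕ) (x : K) :
    D ((n : K) * x) = (n : K) * D x := by
  rw [hmul, myD_natCast D hadd hmul, zero_mul, zero_add]

lemma myD_sum (hadd : ∀ a b : K, D (a + b) = D a + D b) {ι : Type*}
    (s : Finset ι) (f : ι → K) :
    D (∑ i ∈ s, f i) = ∑ i ∈ s, D (f i) := by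
  classical
  induction s using Finset.cons_induction with
  | empty => simpa using myD_zero D hadd
  | cons i s hi ih => rw [Finset.sum_cons, Finset.sum_cons, hadd, ih]

/-- The key bracket identity. -/
lemma bracket (hmul : ∀ a b : K, D (a * b) = D a * b + a * D b) (c : K) (i j : ℕ) :
    bellP D c i * qBell D c (-c) (j + 1) + bellP D c (i + 1) * qBell D c (-c) j
      = D (bellP D c i * qBell D c (-c) j) + c * (bellP D c i * qBell D c (-c) j)
        - (bellP D c i * qBell D c (-c) j) * c := by
  rw [hmul]
  show bellP D c i * ((D (qBell D c (-c) j) + c * qBell D c (-c) j - qBell D c (-c) j * c)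
        + (-c) * qBell D c (-c) j)
      + (D (bellP D c i) + c * bellP D c i) * qBell D c (-c) j = _
  noncomm_ring

/-- `S r` notation via direct sum. Key step: `S (r+1) = Δ_c (S r)`. -/
lemma keystep (hadd : ∀ a b : K, D (a + b) = D a + D b)
    (hmul : ∀ a b : K, D (a * b) = D a * b + a * D b) (c : K) (r : ℕ) :
    (∑ j ∈ Finset.range (r + 2),
        ((r+1).choose j : K) * (bellP D c (r + 1 - j) * qBell D c (-c) j))
    = D (∑ j ∈ Finset.range (r + 1),
          (r.choose j : K) * (bellP D c (r - j) * qBell D c (-c) j))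
      + c * (∑ j ∈ Finset.range (r + 1),
          (r.choose j : K) * (bellP D c (r - j) * qBell D c (-c) j))
      - (∑ j ∈ Finset.range (r + 1),
          (r.choose j : K) * (bellP D c (r - j) * qBell D c (-c) j)) * c := by
  set Q : ℕ → K := qBell D c (-c) with hQ
  set P : ℕ → K := bellP D c with hP
  -- peel off j = 0 term
  rw [Finset.sum_range_succ' (fun j => ((r+1).choose j : K) * (P (r + 1 - j) * Q j)) (r+1)]
  have h0 : ((r+1).choose 0 : K) * (P (r + 1 - 0) * Q 0) = P (r+1) := by
    simp [hQ, qBell]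
  rw [h0]
  have hsplit : ∀ j ∈ Finset.range (r+1),
      ((r+1).choose (j+1) : K) * (P (r + 1 - (j+1)) * Q (j+1))
        = (r.choose j : K) * (P (r - j) * Q (j+1))
          + (r.choose (j+1) : K) * (P (r - j) * Q (j+1)) := by
    intro j hj
    rw [Nat.succ_sub_succ, Nat.choose_succ_succ, Nat.cast_add, add_mul]
  rw [Finset.sum_congr rfl hsplit, Finset.sum_add_distrib]
  -- handle the second sum: reindex
  have h2 : ∑ j ∈ Finset.range (r+1), (r.choose (j+1) : K) * (P (r - j) * Q (j+1))
      = (∑ j ∈ Finset.range (r+1), (r.choose j : K) * (P (r + 1 - j) * Q j)) - P (r+1) := by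
    have := Finset.sum_range_succ' (fun j => (r.choose j : K) * (P (r + 1 - j) * Q j)) (r+1)
    have htop : (r.choose (r+1) : K) * (P (r + 1 - (r+1)) * Q (r+1)) = 0 := by
      simp [Nat.choose_succ_self]
    rw [Finset.sum_range_succ, htop, add_zero] at this
    have h0' : (r.choose 0 : K) * (P (r + 1 - 0) * Q 0) = P (r+1) := by
      simp [hQ, qBell]
    rw [h0'] at this
    -- this : ∑_{range(r+1)} f j = ∑_{range(r+1)} f(j+1) + P(r+1)
    have : ∑ x ∈ Finset.range (r + 1), (↑(r.choose (x + 1)) : K) * (P (r + 1 - (x + 1)) * Q (x + 1))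
        = (∑ j ∈ Finset.range (r+1), (r.choose j : K) * (P (r + 1 - j) * Q j)) - P (r+1) := by
      rw [this, add_sub_cancel_right]
    simpa using this
  rw [h2]
  -- now combine sums; rewrite r+1-j = (r-j)+1 for j ≤ r
  have h3 : ∀ j ∈ Finset.range (r+1),
      (r.choose j : K) * (P (r + 1 - j) * Q j) = (r.choose j : K) * (P ((r - j) + 1) * Q j) := by
    intro j hj
    rw [Finset.mem_range] at hj
    rw [Nat.succ_sub (Nat.lt_succ_iff.mp hj)]
  rw [Finset.sum_congr rfl h3, add_assoc, sub_add_cancel]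
  have h4 : ∀ j ∈ Finset.range (r+1),
      (r.choose j : K) * (P (r - j) * Q (j+1)) + (r.choose j : K) * (P ((r - j) + 1) * Q j)
      = D ((r.choose j : K) * (P (r - j) * Q j))
        + c * ((r.choose j : K) * (P (r - j) * Q j))
        - ((r.choose j : K) * (P (r - j) * Q j)) * c := by
    intro j _
    have hc : Commute ((r.choose j : K)) c := (Nat.commute_cast c _).symm
    rw [← mul_add, bracket D hmul c (r - j) j, mul_sub, mul_add,
      myD_natmul D hadd hmul, hc.left_comm]
    simp only [← hP, ← hQ, mul_assoc]
  calc ∑ j ∈ Finset.range (r+1), (r.choose j : K) * (P (r - j) * Q (j+1))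
        + ∑ j ∈ Finset.range (r+1), (r.choose j : K) * (P ((r - j) + 1) * Q j)
      = ∑ j ∈ Finset.range (r+1),
          ((r.choose j : K) * (P (r - j) * Q (j+1))
            + (r.choose j : K) * (P ((r - j) + 1) * Q j)) := by
        rw [Finset.sum_add_distrib]
    _ = ∑ j ∈ Finset.range (r+1),
          (D ((r.choose j : K) * (P (r - j) * Q j))
            + c * ((r.choose j : K) * (P (r - j) * Q j))
            - ((r.choose j : K) * (P (r - j) * Q j)) * c) := Finset.sum_congr rfl h4
    _ = _ := by
        rw [Finset.sum_sub_distrib, Finset.sum_add_distrib, myD_sum D hadd,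
          ← Finset.mul_sum, ← Finset.sum_mul]

lemma key (hadd : ∀ a b : K, D (a + b) = D a + D b)
    (hmul : ∀ a b : K, D (a * b) = D a * b + a * D b) (c : K) (r : ℕ) :
    (∑ j ∈ Finset.range (r + 1),
        (r.choose j : K) * (bellP D c (r - j) * qBell D c (-c) j))
      = if r = 0 then 1 else 0 := by
  induction r with
  | zero => simp [bellP, qBell]
  | succ m ih =>
    have := keystep D hadd hmul c m
    rw [ih] at this
    rw [show m + 1 + 1 = m + 2 from rfl, this]
    rcases Nat.eq_zero_or_pos m with hm | hm
    · subst hm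
      simp [myD_one D hmul]
    · simp [Nat.pos_iff_ne_zero.mp hm, myD_zero D hadd]

end Aux

/-- the `u⋆`-action fixes all gauge–Wilczynski covariants `I_k`. -/
theorem star_action_fixes_Ik {K : Type*} [Ring K] (D : K → K)
    (hadd : ∀ a b : K, D (a + b) = D a + D b)
    (hmul : ∀ a b : K, D (a * b) = D a * b + a * D b)
    (n : ℕ) (a : ℕ → K) (ha0 : a 0 = 1) (u : K)
    (I : ℕ → K)
    (hI : ∀ k, I k = ∑ j ∈ Finset.range (k + 1),
      (k.choose j : K) * a (k - j) * qBell D (a 1) (-(a 1)) j)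
    (astar : ℕ → K)
    (hastar : ∀ k, astar k = ∑ m ∈ Finset.range (k + 1),
      (k.choose m : K) * I m * bellP D (a 1 - u) (k - m)) :
    ∀ k ≤ n,
      ∑ j ∈ Finset.range (k + 1),
          (k.choose j : K) * astar (k - j) * qBell D (a 1 - u) (-(a 1 - u)) j
        = I k := by
  intro k _
  set c : K := a 1 - u with hc
  set Q : ℕ → K := qBell D c (-c) with hQ
  set P : ℕ → K := bellP D c with hP
  calc ∑ j ∈ Finset.range (k + 1), (k.choose j : K) * astar (k - j) * Q j
      = ∑ j ∈ Finset.range (k + 1), ∑ m ∈ Finset.range (k + 1),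
          (k.choose j : K) * ((((k - j).choose m : K) * I m * P (k - j - m)) * Q j) := by
        refine Finset.sum_congr rfl fun j hj => ?_
        rw [Finset.mem_range, Nat.lt_succ_iff] at hj
        rw [hastar (k - j)]
        -- extend inner sum from range (k-j+1) to range (k+1)
        have hsub : Finset.range (k - j + 1) ⊆ Finset.range (k + 1) := by
          apply Finset.range_subset_range.mpr; omega
        rw [← Finset.sum_subset hsub (fun m hm hm' => by
          rw [Finset.mem_range, Nat.lt_succ_iff] at hm
          rw [Finset.mem_range, Nat.lt_succ_iff] at hm'
          push_neg at hm'
          rw [Nat.choose_eq_zero_of_lt hm']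
          simp), Finset.mul_sum, Finset.sum_mul]
        exact Finset.sum_congr rfl fun m _ => (mul_assoc _ _ _)
    _ = ∑ m ∈ Finset.range (k + 1), ∑ j ∈ Finset.range (k + 1),
          (k.choose m : K) * I m * (((k - m).choose j : K) * (P (k - m - j) * Q j)) := by
        rw [Finset.sum_comm]
        refine Finset.sum_congr rfl fun m hm => Finset.sum_congr rfl fun j hj => ?_
        rw [Finset.mem_range, Nat.lt_succ_iff] at hj hm
        have hch : k.choose j * (k - j).choose m = k.choose m * (k - m).choose j := by
          rcases le_or_gt (j + m) k with h | h
          · have h1 := Nat.choose_mul (k := j + m) (n := k) (s := j) (Nat.le_add_right j m)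
            have h2 := Nat.choose_mul (k := j + m) (n := k) (s := m) (Nat.le_add_left m j)
            rw [Nat.add_sub_cancel_left] at h1
            rw [Nat.add_sub_cancel] at h2
            rw [Nat.choose_symm_add] at h1
            omega
          · have h1 : (k - j).choose m = 0 := Nat.choose_eq_zero_of_lt (by omega)
            have h2 : (k - m).choose j = 0 := Nat.choose_eq_zero_of_lt (by omega)
            rw [h1, h2, Nat.mul_zero, Nat.mul_zero]
        have hsub' : k - j - m = k - m - j := by omega
        rw [hsub']
        have hcast : (k.choose j : K) * ((k - j).choose m : K)
            = (k.choose m : K) * ((k - m).choose j : K) := by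
          rw [← Nat.cast_mul, ← Nat.cast_mul, hch]
        have hcj : Commute (((k - m).choose j : K)) (I m) := (Nat.cast_commute _ _)
        calc (k.choose j : K) * ((((k - j).choose m : K) * I m * P (k - m - j)) * Q j)
            = ((k.choose j : K) * ((k - j).choose m : K)) * (I m * (P (k - m - j) * Q j)) := by
              noncomm_ring
          _ = ((k.choose m : K) * ((k - m).choose j : K)) * (I m * (P (k - m - j) * Q j)) := by
              rw [hcast]
          _ = (k.choose m : K) * (((k - m).choose j : K) * I m) * (P (k - m - j) * Q j) := by
              noncomm_ring
          _ = (k.choose m : K) * (I m * ((k - m).choose j : K)) * (P (k - m - j) * Q j) := by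
              rw [hcj.eq]
          _ = (k.choose m : K) * I m * (((k - m).choose j : K) * (P (k - m - j) * Q j)) := by
              noncomm_ring
    _ = ∑ m ∈ Finset.range (k + 1),
          (k.choose m : K) * I m * (if k - m = 0 then 1 else 0) := by
        refine Finset.sum_congr rfl fun m hm => ?_
        rw [Finset.mem_range, Nat.lt_succ_iff] at hm
        rw [← Finset.mul_sum]
        congr 1
        have hsub : Finset.range (k - m + 1) ⊆ Finset.range (k + 1) := by
          apply Finset.range_subset_range.mpr; omega
        rw [← Finset.sum_subset hsub (fun j hj hj' => by
          rw [Finset.mem_range, Nat.lt_succ_iff] at hj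
          rw [Finset.mem_range, Nat.lt_succ_iff] at hj'
          push_neg at hj'
          rw [Nat.choose_eq_zero_of_lt hj']
          simp)]
        exact key D hadd hmul c (k - m)
    _ = I k := by
        rw [Finset.sum_eq_single_of_mem k (Finset.self_mem_range_succ k)]
        · simp
        · intro m hm hmk
          rw [Finset.mem_range, Nat.lt_succ_iff] at hm
          have : k - m ≠ 0 := by omega
          simp [this]
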